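/- Define ReLU(x) = max(x, 0). Fix real numbers t, ε_LB, ε_UB, ε_CLIP, ε_AND with t − ε_LB ≥ 0, 0 < ε_AND ≤ ε_CLIP, and t − ε_LB + ε_CLIP ≤ t + ε_UB − ε_CLIP. Let o₁(x) = ReLU( ReLU(ReLU(x) − (t − ε_LB)) − ReLU(ReLU(x − ε_CLIP) − (t − ε_LB)) ) and o₂(x) = ReLU( ReLU(−ReLU(x) + (t + ε_UB)) − ReLU(−ReLU(x + ε_CLIP) + (t + ε_UB)) ), and define the composed widget A(x) = ReLU( o₁(x) + o₂(x) − (2ε_CLIP − ε_AND) ). Then: (i) for every x ∈ ℝ with x ≤ t − ε_LB or x ≥ t + ε_UB, A(x) = 0; (ii) for every x with t − ε_LB + ε_CLIP ≤ x ≤ t + ε_UB − ε_CLIP, A(x) = ε_AND; and (iii) 0 ≤ A(x) ≤ ε_AND for every x ∈ ℝ. -/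
import Mathlib
set_option maxHeartbeats 2000000


/-- The rectified linear unit. -/
noncomputable def relu (x : ℝ) : ℝ := max x 0

/-- Scalar Region Selection Widget soundness: composing the Clipped Lower Bound
Widget `o₁`, the Clipped Upper Bound Widget `o₂`, and the Soft AND Widget yields
a function that is `0` outside the target interval, exactly `εAND` deep inside
it, and always bounded between `0` and `εAND`. -/
theorem scalar_region_selection_widget
    (t εLB εUB εCLIP εAND : ℝ)
    (ht : 0 ≤ t - εLB) (hand0 : 0 < εAND) (hand1 : εAND ≤ εCLIP)
    (hsep : t - εLB + εCLIP ≤ t + εUB - εCLIP)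
    (o₁ o₂ A : ℝ → ℝ)
    (ho₁ : ∀ x : ℝ, o₁ x =
      relu (relu (relu x - (t - εLB)) - relu (relu (x - εCLIP) - (t - εLB))))
    (ho₂ : ∀ x : ℝ, o₂ x =
      relu (relu (-relu x + (t + εUB)) - relu (-relu (x + εCLIP) + (t + εUB))))
    (hA : ∀ x : ℝ, A x = relu (o₁ x + o₂ x - (2 * εCLIP - εAND))) :
    (∀ x : ℝ, x ≤ t - εLB ∨ t + εUB ≤ x → A x = 0) ∧
    (∀ x : ℝ, t - εLB + εCLIP ≤ x → x ≤ t + εUB - εCLIP → A x = εAND) ∧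
    (∀ x : ℝ, 0 ≤ A x ∧ A x ≤ εAND) := by
  have hclip : 0 < εCLIP := lt_of_lt_of_le hand0 hand1
  have h1nn : ∀ x : ℝ, 0 ≤ o₁ x := fun x => by rw [ho₁]; exact le_max_right _ _
  have h2nn : ∀ x : ℝ, 0 ≤ o₂ x := fun x => by rw [ho₂]; exact le_max_right _ _
  have h1le : ∀ x : ℝ, o₁ x ≤ εCLIP := fun x => by
    rw [ho₁]; simp only [relu, max_def]; split_ifs <;> linarith
  have h2le : ∀ x : ℝ, o₂ x ≤ εCLIP := fun x => by
    rw [ho₂]; simp only [relu, max_def]; split_ifs <;> linarith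
  have h1zero : ∀ x : ℝ, x ≤ t - εLB → o₁ x = 0 := fun x hx => by
    rw [ho₁]; simp only [relu, max_def]; split_ifs <;> linarith
  have h2zero : ∀ x : ℝ, t + εUB ≤ x → o₂ x = 0 := fun x hx => by
    rw [ho₂]; simp only [relu, max_def]; split_ifs <;> linarith
  have h1full : ∀ x : ℝ, t - εLB + εCLIP ≤ x → o₁ x = εCLIP := fun x hx => by
    rw [ho₁]; simp only [relu, max_def]; split_ifs <;> linarith
  have h2full : ∀ x : ℝ, t - εLB + εCLIP ≤ x → x ≤ t + εUB - εCLIP → o₂ x = εCLIP :=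
    fun x hx hx' => by
    rw [ho₂]; simp only [relu, max_def]; split_ifs <;> linarith
  refine ⟨?_, ?_, ?_⟩
  · intro x hx
    rw [hA]
    rcases hx with h | h
    · have h1 := h1zero x h
      have h2 := h2le x
      simp only [relu, max_def]; split_ifs <;> linarith
    · have h1 := h1le x
      have h2 := h2zero x h
      simp only [relu, max_def]; split_ifs <;> linarith
  · intro x hx hx'
    rw [hA, h1full x hx, h2full x hx hx']
    simp only [relu, max_def]; split_ifs <;> linarith
  · intro x
    have h1 := h1nn x
    have h2 := h2nn x
    have h3 := h1le x
    have h4 := h2le x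
    rw [hA]
    constructor
    · exact le_max_right _ _
    · simp only [relu, max_def]; split_ifs <;> linarith
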